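/- Let f_br, f_cr : [0,1] → ℝ be continuously differentiable and nonnegative, and let τ, ζ, ξ > 0. If (y, z) : ℝ → ℝ² is a solution of the aNIMFA system dy/dt = −y + τ y(1−y)z, dz/dt = −ζ z f_br(y) + ξ (1−z) f_cr(y) such that (y(t), z(t)) ∈ (0,1)² for all t, and (y, z) is periodic with some period T > 0, then (y, z) is constant. That is, the aNIMFA system admits no non-constant periodic solutions lying entirely in the open unit square (0,1)². -/

import Mathlib

open Set MeasureTheory intervalIntegral

/-- The aNIMFA system admits no non-constant periodic solutions lying
    entirely in the open unit square (0,1)². -/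
theorem stmt_3 (fbr fcr : ℝ → ℝ)
    (hbrC : ContDiffOn ℝ 1 fbr (Set.Icc 0 1)) (hcrC : ContDiffOn ℝ 1 fcr (Set.Icc 0 1))
    (hbr : ∀ y ∈ Set.Icc (0:ℝ) 1, 0 ≤ fbr y) (hcr : ∀ y ∈ Set.Icc (0:ℝ) 1, 0 ≤ fcr y)
    (τ ζ ξ : ℝ) (hτ : 0 < τ) (hζ : 0 < ζ) (hξ : 0 < ξ)
    (y z : ℝ → ℝ)
    (hy : ∀ t : ℝ, HasDerivAt y (-(y t) + τ * y t * (1 - y t) * z t) t)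
    (hz : ∀ t : ℝ, HasDerivAt z (-(ζ * z t * fbr (y t)) + ξ * (1 - z t) * fcr (y t)) t)
    (hin : ∀ t : ℝ, y t ∈ Set.Ioo (0:ℝ) 1 ∧ z t ∈ Set.Ioo (0:ℝ) 1)
    (T : ℝ) (hT : 0 < T)
    (hper : ∀ t : ℝ, y (t + T) = y t ∧ z (t + T) = z t) :
    ∀ t s : ℝ, y t = y s ∧ z t = z s := by
  -- basic bounds
  have hy0 : ∀ t, 0 < y t := fun t => (hin t).1.1
  have hy1 : ∀ t, y t < 1 := fun t => (hin t).1.2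
  have h1y : ∀ t, (0:ℝ) < 1 - y t := fun t => by linarith [hy1 t]
  have h1yne : ∀ t, (1 : ℝ) - y t ≠ 0 := fun t => (h1y t).ne'
  have hyne : ∀ t, y t ≠ 0 := fun t => (hy0 t).ne'
  have hymem : ∀ t, y t ∈ Set.Icc (0:ℝ) 1 := fun t => ⟨(hy0 t).le, (hy1 t).le⟩
  -- abbreviations
  set yd : ℝ → ℝ := fun t => -(y t) + τ * y t * (1 - y t) * z t with hyddef
  set zd : ℝ → ℝ := fun t => -(ζ * z t * fbr (y t)) + ξ * (1 - z t) * fcr (y t) with hzddef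
  set q : ℝ → ℝ := fun t => τ * z t - (1 - y t)⁻¹ with hqdef
  set c : ℝ → ℝ := fun t => ζ * fbr (y t) + ξ * fcr (y t) with hcdef
  set G : ℝ → ℝ := fun t => (c t + y t / (1 - y t)) * q t ^ 2 with hGdef
  set v : ℝ → ℝ := fun w =>
    ((ζ * fbr w + ξ * fcr w) * (1 - w)⁻¹ - τ * (ξ * fcr w)) / (w * (1 - w)) with hvdef
  -- continuity
  have ycont : Continuous y := by
    rw [continuous_iff_continuousAt]; exact fun t => (hy t).continuousAt
  have zcont : Continuous z := by
    rw [continuous_iff_continuousAt]; exact fun t => (hz t).continuousAt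
  have fbrycont : Continuous fun t => fbr (y t) :=
    hbrC.continuousOn.comp_continuous ycont hymem
  have fcrycont : Continuous fun t => fcr (y t) :=
    hcrC.continuousOn.comp_continuous ycont hymem
  have ydcont : Continuous yd := by
    apply Continuous.add (ycont.neg)
    exact ((continuous_const.mul ycont).mul (continuous_const.sub ycont)).mul zcont
  have qcont : Continuous q :=
    (continuous_const.mul zcont).sub ((continuous_const.sub ycont).inv₀ h1yne)
  have ccont : Continuous c :=
    (continuous_const.mul fbrycont).add (continuous_const.mul fcrycont)
  have Gcont : Continuous G :=
    (ccont.add (ycont.div (continuous_const.sub ycont) h1yne)).mul (qcont.pow 2)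
  have vycont : Continuous fun t => v (y t) := by
    apply Continuous.div
    · exact ((ccont.mul ((continuous_const.sub ycont).inv₀ h1yne))).sub
        (continuous_const.mul (continuous_const.mul fcrycont))
    · exact ycont.mul (continuous_const.sub ycont)
    · intro t; exact mul_ne_zero (hyne t) (h1yne t)
  -- derivative of q
  have hq : ∀ t, HasDerivAt q (τ * zd t - yd t / (1 - y t) ^ 2) t := by
    intro t
    have h1 : HasDerivAt (fun s => 1 - y s) (-(yd t)) t := (hy t).const_sub 1
    have h2 := h1.inv (h1yne t)
    have h3 := ((hz t).const_mul τ).sub h2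
    refine h3.congr_deriv ?_
    simp only [hzddef]; ring
  -- nonnegativity of c
  have hcnn : ∀ t, 0 ≤ c t := fun t =>
    add_nonneg (mul_nonneg hζ.le (hbr _ (hymem t))) (mul_nonneg hξ.le (hcr _ (hymem t)))
  have hGnn : ∀ t, 0 ≤ G t := fun t =>
    mul_nonneg (add_nonneg (hcnn t) (div_nonneg (hy0 t).le (h1y t).le)) (sq_nonneg _)
  -- key pointwise identity
  have hkey : ∀ t, q t * (τ * zd t - yd t / (1 - y t) ^ 2) = -(G t) - v (y t) * yd t := by
    intro t
    simp only [hqdef, hyddef, hzddef, hcdef, hGdef, hvdef]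
    have h1 := hyne t; have h2 := h1yne t
    field_simp
    ring
  -- energy function
  have hE : ∀ t, HasDerivAt (fun s => q s ^ 2 / 2) (-(G t) - v (y t) * yd t) t := by
    intro t
    have h := ((hq t).pow 2).div_const 2
    refine h.congr_deriv ?_
    rw [← hkey t]
    push_cast
    ring
  -- the integral of G over any period window vanishes
  have hGint : ∀ a : ℝ, ∫ t in a..(a + T), G t = 0 := by
    intro a
    have hab : a ≤ a + T := by linarith
    have hftc : ∫ t in a..(a + T), (-(G t) - v (y t) * yd t)
        = q (a + T) ^ 2 / 2 - q a ^ 2 / 2 := by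
      exact intervalIntegral.integral_eq_sub_of_hasDerivAt
        (f := fun s => q s ^ 2 / 2) (fun t _ => hE t)
        (((Gcont.neg).sub (vycont.mul ydcont)).intervalIntegrable _ _)
    have hqper : q (a + T) = q a := by
      simp only [hqdef, (hper a).1, (hper a).2]
    rw [hqper, sub_self] at hftc
    have hsub : (∫ t in a..(a + T), v (y t) * yd t) = 0 := by
      have him : ContinuousOn v (y '' (Set.uIcc a (a + T))) := by
        have hsub1 : y '' Set.uIcc a (a + T) ⊆ Set.Ioo (0:ℝ) 1 := by
          rintro w ⟨t, _, rfl⟩; exact (hin t).1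
        apply ContinuousOn.mono _ hsub1
        have hbr' : ContinuousOn fbr (Set.Ioo (0:ℝ) 1) :=
          hbrC.continuousOn.mono Set.Ioo_subset_Icc_self
        have hcr' : ContinuousOn fcr (Set.Ioo (0:ℝ) 1) :=
          hcrC.continuousOn.mono Set.Ioo_subset_Icc_self
        have hone : ContinuousOn (fun w : ℝ => (1 - w)⁻¹) (Set.Ioo (0:ℝ) 1) :=
          (continuousOn_const.sub (continuous_id.continuousOn)).inv₀
            (fun w hw => sub_ne_zero_of_ne (ne_of_gt hw.2))
        apply ContinuousOn.div
        · exact ((((continuousOn_const.mul hbr').add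
            (continuousOn_const.mul hcr')).mul hone).sub
            (continuousOn_const.mul (continuousOn_const.mul hcr')))
        · exact (continuous_id.continuousOn).mul
            (continuousOn_const.sub (continuous_id.continuousOn))
        · intro w hw
          exact mul_ne_zero (ne_of_gt hw.1) (sub_ne_zero_of_ne (ne_of_gt hw.2))
      have := intervalIntegral.integral_comp_mul_deriv''
        (f := y) (f' := yd) (g := v) (a := a) (b := a + T)
        ycont.continuousOn
        (fun x _ => (hy x).hasDerivWithinAt)
        ydcont.continuousOn him
      rw [(hper a).1] at this
      simpa [Function.comp, intervalIntegral.integral_same, mul_comm] using this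
    have hGi : IntervalIntegrable G volume a (a + T) := Gcont.intervalIntegrable _ _
    have hvydi : IntervalIntegrable (fun t => v (y t) * yd t) volume a (a + T) :=
      (vycont.mul ydcont).intervalIntegrable _ _
    have : (∫ t in a..(a + T), (-(G t) - v (y t) * yd t))
        = -(∫ t in a..(a + T), G t) - ∫ t in a..(a + T), v (y t) * yd t := by
      have hGi' : IntervalIntegrable (fun t => -(G t)) volume a (a + T) :=
        (Gcont.neg).intervalIntegrable _ _
      rw [intervalIntegral.integral_sub hGi' hvydi, intervalIntegral.integral_neg]
    rw [this, hsub, sub_zero, neg_eq_zero] at hftc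
    exact hftc
  -- pointwise vanishing of G, hence of q
  have hq0 : ∀ t, q t = 0 := by
    intro t0
    set a := t0 - T / 2 with hadef
    have ht0mem : t0 ∈ Set.Ioc a (a + T) := ⟨by simp [hadef]; linarith, by simp [hadef]; linarith⟩
    have h0 := hGint a
    have hab : a ≤ a + T := by linarith
    replace h0 := (intervalIntegral.integral_eq_zero_iff_of_le_of_nonneg_ae hab
      (Filter.Eventually.of_forall (fun t => hGnn t))
      (Gcont.intervalIntegrable _ _)).mp h0
    have hEq : Set.EqOn G 0 (Set.Ioc a (a + T)) :=
      MeasureTheory.Measure.eqOn_Ioc_of_ae_eq volume h0 Gcont.continuousOn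
        continuousOn_const
    have hG0 : G t0 = 0 := hEq ht0mem
    have hfacpos : 0 < c t0 + y t0 / (1 - y t0) :=
      add_pos_of_nonneg_of_pos (hcnn t0) (div_pos (hy0 t0) (h1y t0))
    have : q t0 ^ 2 = 0 := by
      by_contra h
      have := (mul_ne_zero hfacpos.ne' h) hG0
      exact this
    exact pow_eq_zero_iff (n := 2) (by norm_num) |>.mp this
  -- y has zero derivative, hence constant
  have hyd0 : ∀ t, yd t = 0 := by
    intro t
    have : yd t = y t * (1 - y t) * q t := by
      have h1 := hyne t; have h2 := h1yne t
      simp only [hyddef, hqdef]; field_simp; ring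
    rw [this, hq0 t, mul_zero]
  have hyconst : ∀ t s, y t = y s := by
    intro t s
    exact is_const_of_deriv_eq_zero (fun u => (hy u).differentiableAt)
      (fun u => by rw [(hy u).deriv]; exact hyd0 u) t s
  have hzval : ∀ t, z t = (1 - y t)⁻¹ / τ := by
    intro t
    have h := hq0 t
    simp only [hqdef] at h
    have h2 := h1yne t
    have h3 := hτ.ne'
    field_simp at h ⊢
    linarith
  intro t s
  refine ⟨hyconst t s, ?_⟩
  rw [hzval t, hzval s, hyconst t s]
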